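/- Let F = GF(3)[x]/(x^4 + x − 1) ≅ GF(3^4) and let ω be the image of x in F. Then ω generates the multiplicative group F*, and, setting B = {0, 1, ω^16, ω^56, ω^58, ω^73}, G_0 = ⟨μ, φ⟩ where μ : y ↦ ω^5 y and φ : y ↦ y^9, and G = T ⋊ G_0 where T is the group of translations y ↦ y + c of F: the group G_0 has order 32, the incidence structure with point set F and block set the G-orbit of B is a 2-(81,6,2) design, and G acts flag-transitively on it. -/

import Mathlib

set_option linter.unusedSectionVars false
def ztab : List ℕ := [40, 53, 24, 79, 13, 74, 72, 25, 59, 77, 70, 32, 39, 41, 19, 62, 58, 2, 56, 48, 30, 75, 55, 7, 17, 23, 34, 71, 31, 35, 50, 67, 46, 16, 45, 61, 37, 49, 15, 43, 80, 4, 57, 12, 1, 26, 11, 63, 14, 36, 20, 6, 3, 44, 8, 78, 73, 64, 33, 54, 10, 29, 38, 65, 42, 47, 5, 28, 27, 21, 60, 68, 51, 18, 66, 69, 9, 76, 22, 52]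

def ztabn (k : ℕ) : ℕ := ztab.getD k 0

def addK (a b : Fin 81) : Fin 81 :=
  if a.val = 80 then b else if b.val = 80 then a
  else if (b.val + 80 - a.val) % 80 = 40 then ⟨80, by omega⟩
  else ⟨(a.val + ztabn ((b.val + 80 - a.val) % 80)) % 80, by omega⟩

def gKf (i j : ℕ) (k : Fin 81) : Fin 81 :=
  if k.val = 80 then k else ⟨(5 * i + 9 ^ j * k.val) % 80, by omega⟩

def BK : Finset (Fin 81) := {80, 0, 16, 56, 58, 73}

def blockK (i : Fin 16) (j : Fin 2) (c : Fin 81) : Finset (Fin 81) :=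
  BK.image (fun b => addK (gKf i.val j.val b) c)
section Decides

def negK (a : Fin 81) : Fin 81 := if a.val = 80 then a else ⟨(a.val + 40) % 80, by omega⟩

def stabf (b : Fin 81) : Fin 16 × Fin 2 × Fin 81 :=
  if b = 0 then (8, 0, 0) else if b = 16 then (0, 0, 56) else if b = 56 then (0, 0, 16)
  else if b = 58 then (8, 0, 58) else if b = 73 then (8, 0, 73) else (0, 0, 80)

set_option maxRecDepth 100000

theorem dred : ∀ k : Fin 80, ∃ i : Fin 16, ∃ j : Fin 2, ∃ r : Fin 3,
    (5 * i.val + 9 ^ j.val * k.val) % 80 = r.val := by decide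

set_option maxHeartbeats 1000000 in
theorem dneg : ∀ x c : Fin 81, addK x c = (80 : Fin 81) → c = negK x := by decide

set_option maxHeartbeats 1000000 in
theorem dstab : ∀ b ∈ BK, blockK (stabf b).1 (stabf b).2.1 (stabf b).2.2 = BK ∧
    addK (gKf (stabf b).1.val (stabf b).2.1.val b) (stabf b).2.2 = (80 : Fin 81) := by decide

theorem dcardBK : BK.card = 6 := by decide

set_option maxHeartbeats 4000000 in
theorem dlam0 : ∀ (i : Fin 16) (j : Fin 2) (b : Fin 81), b ∈ BK →
    (0 : Fin 81) ∈ blockK i j (negK (gKf i.val j.val b)) →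
    (blockK i j (negK (gKf i.val j.val b)) = ({0,17,24,42,64,80} : Finset (Fin 81)) ∨
     blockK i j (negK (gKf i.val j.val b)) = ({0,16,56,58,73,80} : Finset (Fin 81))) := by decide

set_option maxHeartbeats 4000000 in
theorem dlam1 : ∀ (i : Fin 16) (j : Fin 2) (b : Fin 81), b ∈ BK →
    (1 : Fin 81) ∈ blockK i j (negK (gKf i.val j.val b)) →
    (blockK i j (negK (gKf i.val j.val b)) = ({1,3,18,25,41,80} : Finset (Fin 81)) ∨
     blockK i j (negK (gKf i.val j.val b)) = ({1,41,43,58,65,80} : Finset (Fin 81))) := by decide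

set_option maxHeartbeats 4000000 in
theorem dlam2 : ∀ (i : Fin 16) (j : Fin 2) (b : Fin 81), b ∈ BK →
    (2 : Fin 81) ∈ blockK i j (negK (gKf i.val j.val b)) →
    (blockK i j (negK (gKf i.val j.val b)) = ({2,24,40,57,64,80} : Finset (Fin 81)) ∨
     blockK i j (negK (gKf i.val j.val b)) = ({2,9,27,49,65,80} : Finset (Fin 81))) := by decide

set_option maxHeartbeats 1000000 in
theorem dw0 : blockK 0 1 24 = ({0,17,24,42,64,80} : Finset (Fin 81)) ∧
    blockK 0 0 16 = ({0,16,56,58,73,80} : Finset (Fin 81)) ∧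
    (80 : Fin 81) ∈ ({0,17,24,42,64,80} : Finset (Fin 81)) ∧
    (0 : Fin 81) ∈ ({0,17,24,42,64,80} : Finset (Fin 81)) ∧
    (80 : Fin 81) ∈ ({0,16,56,58,73,80} : Finset (Fin 81)) ∧
    (0 : Fin 81) ∈ ({0,16,56,58,73,80} : Finset (Fin 81)) ∧
    ({0,17,24,42,64,80} : Finset (Fin 81)) ≠ ({0,16,56,58,73,80} : Finset (Fin 81)) := by decide

set_option maxHeartbeats 1000000 in
theorem dw1 : blockK 5 0 1 = ({1,3,18,25,41,80} : Finset (Fin 81)) ∧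
    blockK 5 0 43 = ({1,41,43,58,65,80} : Finset (Fin 81)) ∧
    (80 : Fin 81) ∈ ({1,3,18,25,41,80} : Finset (Fin 81)) ∧
    (1 : Fin 81) ∈ ({1,3,18,25,41,80} : Finset (Fin 81)) ∧
    (80 : Fin 81) ∈ ({1,41,43,58,65,80} : Finset (Fin 81)) ∧
    (1 : Fin 81) ∈ ({1,41,43,58,65,80} : Finset (Fin 81)) ∧
    ({1,3,18,25,41,80} : Finset (Fin 81)) ≠ ({1,41,43,58,65,80} : Finset (Fin 81)) := by decide

set_option maxHeartbeats 1000000 in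
theorem dw2 : blockK 0 1 2 = ({2,24,40,57,64,80} : Finset (Fin 81)) ∧
    blockK 5 1 2 = ({2,9,27,49,65,80} : Finset (Fin 81)) ∧
    (80 : Fin 81) ∈ ({2,24,40,57,64,80} : Finset (Fin 81)) ∧
    (2 : Fin 81) ∈ ({2,24,40,57,64,80} : Finset (Fin 81)) ∧
    (80 : Fin 81) ∈ ({2,9,27,49,65,80} : Finset (Fin 81)) ∧
    (2 : Fin 81) ∈ ({2,9,27,49,65,80} : Finset (Fin 81)) ∧
    ({2,24,40,57,64,80} : Finset (Fin 81)) ≠ ({2,9,27,49,65,80} : Finset (Fin 81)) := by decide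

end Decides
section Cert
variable {F : Type*} [Field F] (ω : F) (hω : ω ^ 4 + ω - 1 = 0) (h3 : (3:F) = 0)
include hω h3

private lemma pw0 : ω ^ 0 = 1 := by ring

private lemma pw1 : ω ^ 1 = ω := by ring

private lemma pw2 : ω ^ 2 = ω^2 := by
  linear_combination ω * (pw1 ω hω h3)

private lemma pw3 : ω ^ 3 = ω^3 := by
  linear_combination ω * (pw2 ω hω h3)

private lemma pw4 : ω ^ 4 = 1 + 2*ω := by
  linear_combination ω * (pw3 ω hω h3) + (1) * hω + (-ω) * h3

private lemma pw5 : ω ^ 5 = ω + 2*ω^2 := by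
  linear_combination ω * (pw4 ω hω h3)

private lemma pw6 : ω ^ 6 = ω^2 + 2*ω^3 := by
  linear_combination ω * (pw5 ω hω h3)

private lemma pw7 : ω ^ 7 = 2 + ω + ω^3 := by
  linear_combination ω * (pw6 ω hω h3) + (2) * hω + (-ω) * h3

private lemma pw8 : ω ^ 8 = 1 + ω + ω^2 := by
  linear_combination ω * (pw7 ω hω h3) + (1) * hω

private lemma pw9 : ω ^ 9 = ω + ω^2 + ω^3 := by
  linear_combination ω * (pw8 ω hω h3)

private lemma pw10 : ω ^ 10 = 1 + 2*ω + ω^2 + ω^3 := by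
  linear_combination ω * (pw9 ω hω h3) + (1) * hω + (-ω) * h3

private lemma pw11 : ω ^ 11 = 1 + 2*ω^2 + ω^3 := by
  linear_combination ω * (pw10 ω hω h3) + (1) * hω

private lemma pw12 : ω ^ 12 = 1 + 2*ω^3 := by
  linear_combination ω * (pw11 ω hω h3) + (1) * hω

private lemma pw13 : ω ^ 13 = 2 + 2*ω := by
  linear_combination ω * (pw12 ω hω h3) + (2) * hω + (-ω) * h3

private lemma pw14 : ω ^ 14 = 2*ω + 2*ω^2 := by
  linear_combination ω * (pw13 ω hω h3)

private lemma pw15 : ω ^ 15 = 2*ω^2 + 2*ω^3 := by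
  linear_combination ω * (pw14 ω hω h3)

private lemma pw16 : ω ^ 16 = 2 + ω + 2*ω^3 := by
  linear_combination ω * (pw15 ω hω h3) + (2) * hω + (-ω) * h3

private lemma pw17 : ω ^ 17 = 2 + ω^2 := by
  linear_combination ω * (pw16 ω hω h3) + (2) * hω

private lemma pw18 : ω ^ 18 = 2*ω + ω^3 := by
  linear_combination ω * (pw17 ω hω h3)

private lemma pw19 : ω ^ 19 = 1 + 2*ω + 2*ω^2 := by
  linear_combination ω * (pw18 ω hω h3) + (1) * hω + (-ω) * h3

private lemma pw20 : ω ^ 20 = ω + 2*ω^2 + 2*ω^3 := by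
  linear_combination ω * (pw19 ω hω h3)

private lemma pw21 : ω ^ 21 = 2 + ω + ω^2 + 2*ω^3 := by
  linear_combination ω * (pw20 ω hω h3) + (2) * hω + (-ω) * h3

private lemma pw22 : ω ^ 22 = 2 + ω^2 + ω^3 := by
  linear_combination ω * (pw21 ω hω h3) + (2) * hω

private lemma pw23 : ω ^ 23 = 1 + ω + ω^3 := by
  linear_combination ω * (pw22 ω hω h3) + (1) * hω

private lemma pw24 : ω ^ 24 = 1 + ω^2 := by
  linear_combination ω * (pw23 ω hω h3) + (1) * hω

private lemma pw25 : ω ^ 25 = ω + ω^3 := by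
  linear_combination ω * (pw24 ω hω h3)

private lemma pw26 : ω ^ 26 = 1 + 2*ω + ω^2 := by
  linear_combination ω * (pw25 ω hω h3) + (1) * hω + (-ω) * h3

private lemma pw27 : ω ^ 27 = ω + 2*ω^2 + ω^3 := by
  linear_combination ω * (pw26 ω hω h3)

private lemma pw28 : ω ^ 28 = 1 + 2*ω + ω^2 + 2*ω^3 := by
  linear_combination ω * (pw27 ω hω h3) + (1) * hω + (-ω) * h3

private lemma pw29 : ω ^ 29 = 2 + 2*ω + 2*ω^2 + ω^3 := by
  linear_combination ω * (pw28 ω hω h3) + (2) * hω + (-ω) * h3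

private lemma pw30 : ω ^ 30 = 1 + ω + 2*ω^2 + 2*ω^3 := by
  linear_combination ω * (pw29 ω hω h3) + (1) * hω

private lemma pw31 : ω ^ 31 = 2 + 2*ω + ω^2 + 2*ω^3 := by
  linear_combination ω * (pw30 ω hω h3) + (2) * hω + (-ω) * h3

private lemma pw32 : ω ^ 32 = 2 + 2*ω^2 + ω^3 := by
  linear_combination ω * (pw31 ω hω h3) + (2) * hω

private lemma pw33 : ω ^ 33 = 1 + ω + 2*ω^3 := by
  linear_combination ω * (pw32 ω hω h3) + (1) * hω

private lemma pw34 : ω ^ 34 = 2 + 2*ω + ω^2 := by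
  linear_combination ω * (pw33 ω hω h3) + (2) * hω + (-ω) * h3

private lemma pw35 : ω ^ 35 = 2*ω + 2*ω^2 + ω^3 := by
  linear_combination ω * (pw34 ω hω h3)

private lemma pw36 : ω ^ 36 = 1 + 2*ω + 2*ω^2 + 2*ω^3 := by
  linear_combination ω * (pw35 ω hω h3) + (1) * hω + (-ω) * h3

private lemma pw37 : ω ^ 37 = 2 + 2*ω + 2*ω^2 + 2*ω^3 := by
  linear_combination ω * (pw36 ω hω h3) + (2) * hω + (-ω) * h3

private lemma pw38 : ω ^ 38 = 2 + 2*ω^2 + 2*ω^3 := by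
  linear_combination ω * (pw37 ω hω h3) + (2) * hω

private lemma pw39 : ω ^ 39 = 2 + 2*ω^3 := by
  linear_combination ω * (pw38 ω hω h3) + (2) * hω

private lemma pw40 : ω ^ 40 = 2 := by
  linear_combination ω * (pw39 ω hω h3) + (2) * hω

private lemma pw41 : ω ^ 41 = 2*ω := by
  linear_combination ω * (pw40 ω hω h3)

private lemma pw42 : ω ^ 42 = 2*ω^2 := by
  linear_combination ω * (pw41 ω hω h3)

private lemma pw43 : ω ^ 43 = 2*ω^3 := by
  linear_combination ω * (pw42 ω hω h3)

private lemma pw44 : ω ^ 44 = 2 + ω := by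
  linear_combination ω * (pw43 ω hω h3) + (2) * hω + (-ω) * h3

private lemma pw45 : ω ^ 45 = 2*ω + ω^2 := by
  linear_combination ω * (pw44 ω hω h3)

private lemma pw46 : ω ^ 46 = 2*ω^2 + ω^3 := by
  linear_combination ω * (pw45 ω hω h3)

private lemma pw47 : ω ^ 47 = 1 + 2*ω + 2*ω^3 := by
  linear_combination ω * (pw46 ω hω h3) + (1) * hω + (-ω) * h3

private lemma pw48 : ω ^ 48 = 2 + 2*ω + 2*ω^2 := by
  linear_combination ω * (pw47 ω hω h3) + (2) * hω + (-ω) * h3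

private lemma pw49 : ω ^ 49 = 2*ω + 2*ω^2 + 2*ω^3 := by
  linear_combination ω * (pw48 ω hω h3)

private lemma pw50 : ω ^ 50 = 2 + ω + 2*ω^2 + 2*ω^3 := by
  linear_combination ω * (pw49 ω hω h3) + (2) * hω + (-ω) * h3

private lemma pw51 : ω ^ 51 = 2 + ω^2 + 2*ω^3 := by
  linear_combination ω * (pw50 ω hω h3) + (2) * hω

private lemma pw52 : ω ^ 52 = 2 + ω^3 := by
  linear_combination ω * (pw51 ω hω h3) + (2) * hω

private lemma pw53 : ω ^ 53 = 1 + ω := by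
  linear_combination ω * (pw52 ω hω h3) + (1) * hω

private lemma pw54 : ω ^ 54 = ω + ω^2 := by
  linear_combination ω * (pw53 ω hω h3)

private lemma pw55 : ω ^ 55 = ω^2 + ω^3 := by
  linear_combination ω * (pw54 ω hω h3)

private lemma pw56 : ω ^ 56 = 1 + 2*ω + ω^3 := by
  linear_combination ω * (pw55 ω hω h3) + (1) * hω + (-ω) * h3

private lemma pw57 : ω ^ 57 = 1 + 2*ω^2 := by
  linear_combination ω * (pw56 ω hω h3) + (1) * hω

private lemma pw58 : ω ^ 58 = ω + 2*ω^3 := by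
  linear_combination ω * (pw57 ω hω h3)

private lemma pw59 : ω ^ 59 = 2 + ω + ω^2 := by
  linear_combination ω * (pw58 ω hω h3) + (2) * hω + (-ω) * h3

private lemma pw60 : ω ^ 60 = 2*ω + ω^2 + ω^3 := by
  linear_combination ω * (pw59 ω hω h3)

private lemma pw61 : ω ^ 61 = 1 + 2*ω + 2*ω^2 + ω^3 := by
  linear_combination ω * (pw60 ω hω h3) + (1) * hω + (-ω) * h3

private lemma pw62 : ω ^ 62 = 1 + 2*ω^2 + 2*ω^3 := by
  linear_combination ω * (pw61 ω hω h3) + (1) * hω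

private lemma pw63 : ω ^ 63 = 2 + 2*ω + 2*ω^3 := by
  linear_combination ω * (pw62 ω hω h3) + (2) * hω + (-ω) * h3

private lemma pw64 : ω ^ 64 = 2 + 2*ω^2 := by
  linear_combination ω * (pw63 ω hω h3) + (2) * hω

private lemma pw65 : ω ^ 65 = 2*ω + 2*ω^3 := by
  linear_combination ω * (pw64 ω hω h3)

private lemma pw66 : ω ^ 66 = 2 + ω + 2*ω^2 := by
  linear_combination ω * (pw65 ω hω h3) + (2) * hω + (-ω) * h3

private lemma pw67 : ω ^ 67 = 2*ω + ω^2 + 2*ω^3 := by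
  linear_combination ω * (pw66 ω hω h3)

private lemma pw68 : ω ^ 68 = 2 + ω + 2*ω^2 + ω^3 := by
  linear_combination ω * (pw67 ω hω h3) + (2) * hω + (-ω) * h3

private lemma pw69 : ω ^ 69 = 1 + ω + ω^2 + 2*ω^3 := by
  linear_combination ω * (pw68 ω hω h3) + (1) * hω

private lemma pw70 : ω ^ 70 = 2 + 2*ω + ω^2 + ω^3 := by
  linear_combination ω * (pw69 ω hω h3) + (2) * hω + (-ω) * h3

private lemma pw71 : ω ^ 71 = 1 + ω + 2*ω^2 + ω^3 := by
  linear_combination ω * (pw70 ω hω h3) + (1) * hω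

private lemma pw72 : ω ^ 72 = 1 + ω^2 + 2*ω^3 := by
  linear_combination ω * (pw71 ω hω h3) + (1) * hω

private lemma pw73 : ω ^ 73 = 2 + 2*ω + ω^3 := by
  linear_combination ω * (pw72 ω hω h3) + (2) * hω + (-ω) * h3

private lemma pw74 : ω ^ 74 = 1 + ω + 2*ω^2 := by
  linear_combination ω * (pw73 ω hω h3) + (1) * hω

private lemma pw75 : ω ^ 75 = ω + ω^2 + 2*ω^3 := by
  linear_combination ω * (pw74 ω hω h3)

private lemma pw76 : ω ^ 76 = 2 + ω + ω^2 + ω^3 := by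
  linear_combination ω * (pw75 ω hω h3) + (2) * hω + (-ω) * h3

private lemma pw77 : ω ^ 77 = 1 + ω + ω^2 + ω^3 := by
  linear_combination ω * (pw76 ω hω h3) + (1) * hω

private lemma pw78 : ω ^ 78 = 1 + ω^2 + ω^3 := by
  linear_combination ω * (pw77 ω hω h3) + (1) * hω

private lemma pw79 : ω ^ 79 = 1 + ω^3 := by
  linear_combination ω * (pw78 ω hω h3) + (1) * hω

private lemma pw80 : ω ^ 80 = 1 := by
  linear_combination ω * (pw79 ω hω h3) + (1) * hω

private lemma zc0 : (1:F) + ω ^ 0 = ω ^ 40 := by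
  linear_combination pw0 ω hω h3 - (pw40 ω hω h3)

private lemma zc1 : (1:F) + ω ^ 1 = ω ^ 53 := by
  linear_combination pw1 ω hω h3 - (pw53 ω hω h3)

private lemma zc2 : (1:F) + ω ^ 2 = ω ^ 24 := by
  linear_combination pw2 ω hω h3 - (pw24 ω hω h3)

private lemma zc3 : (1:F) + ω ^ 3 = ω ^ 79 := by
  linear_combination pw3 ω hω h3 - (pw79 ω hω h3)

private lemma zc4 : (1:F) + ω ^ 4 = ω ^ 13 := by
  linear_combination pw4 ω hω h3 - (pw13 ω hω h3)

private lemma zc5 : (1:F) + ω ^ 5 = ω ^ 74 := by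
  linear_combination pw5 ω hω h3 - (pw74 ω hω h3)

private lemma zc6 : (1:F) + ω ^ 6 = ω ^ 72 := by
  linear_combination pw6 ω hω h3 - (pw72 ω hω h3)

private lemma zc7 : (1:F) + ω ^ 7 = ω ^ 25 := by
  linear_combination pw7 ω hω h3 - (pw25 ω hω h3) + (1) * h3

private lemma zc8 : (1:F) + ω ^ 8 = ω ^ 59 := by
  linear_combination pw8 ω hω h3 - (pw59 ω hω h3)

private lemma zc9 : (1:F) + ω ^ 9 = ω ^ 77 := by
  linear_combination pw9 ω hω h3 - (pw77 ω hω h3)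

private lemma zc10 : (1:F) + ω ^ 10 = ω ^ 70 := by
  linear_combination pw10 ω hω h3 - (pw70 ω hω h3)

private lemma zc11 : (1:F) + ω ^ 11 = ω ^ 32 := by
  linear_combination pw11 ω hω h3 - (pw32 ω hω h3)

private lemma zc12 : (1:F) + ω ^ 12 = ω ^ 39 := by
  linear_combination pw12 ω hω h3 - (pw39 ω hω h3)

private lemma zc13 : (1:F) + ω ^ 13 = ω ^ 41 := by
  linear_combination pw13 ω hω h3 - (pw41 ω hω h3) + (1) * h3

private lemma zc14 : (1:F) + ω ^ 14 = ω ^ 19 := by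
  linear_combination pw14 ω hω h3 - (pw19 ω hω h3)

private lemma zc15 : (1:F) + ω ^ 15 = ω ^ 62 := by
  linear_combination pw15 ω hω h3 - (pw62 ω hω h3)

private lemma zc16 : (1:F) + ω ^ 16 = ω ^ 58 := by
  linear_combination pw16 ω hω h3 - (pw58 ω hω h3) + (1) * h3

private lemma zc17 : (1:F) + ω ^ 17 = ω ^ 2 := by
  linear_combination pw17 ω hω h3 - (pw2 ω hω h3) + (1) * h3

private lemma zc18 : (1:F) + ω ^ 18 = ω ^ 56 := by
  linear_combination pw18 ω hω h3 - (pw56 ω hω h3)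

private lemma zc19 : (1:F) + ω ^ 19 = ω ^ 48 := by
  linear_combination pw19 ω hω h3 - (pw48 ω hω h3)

private lemma zc20 : (1:F) + ω ^ 20 = ω ^ 30 := by
  linear_combination pw20 ω hω h3 - (pw30 ω hω h3)

private lemma zc21 : (1:F) + ω ^ 21 = ω ^ 75 := by
  linear_combination pw21 ω hω h3 - (pw75 ω hω h3) + (1) * h3

private lemma zc22 : (1:F) + ω ^ 22 = ω ^ 55 := by
  linear_combination pw22 ω hω h3 - (pw55 ω hω h3) + (1) * h3

private lemma zc23 : (1:F) + ω ^ 23 = ω ^ 7 := by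
  linear_combination pw23 ω hω h3 - (pw7 ω hω h3)

private lemma zc24 : (1:F) + ω ^ 24 = ω ^ 17 := by
  linear_combination pw24 ω hω h3 - (pw17 ω hω h3)

private lemma zc25 : (1:F) + ω ^ 25 = ω ^ 23 := by
  linear_combination pw25 ω hω h3 - (pw23 ω hω h3)

private lemma zc26 : (1:F) + ω ^ 26 = ω ^ 34 := by
  linear_combination pw26 ω hω h3 - (pw34 ω hω h3)

private lemma zc27 : (1:F) + ω ^ 27 = ω ^ 71 := by
  linear_combination pw27 ω hω h3 - (pw71 ω hω h3)

private lemma zc28 : (1:F) + ω ^ 28 = ω ^ 31 := by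
  linear_combination pw28 ω hω h3 - (pw31 ω hω h3)

private lemma zc29 : (1:F) + ω ^ 29 = ω ^ 35 := by
  linear_combination pw29 ω hω h3 - (pw35 ω hω h3) + (1) * h3

private lemma zc30 : (1:F) + ω ^ 30 = ω ^ 50 := by
  linear_combination pw30 ω hω h3 - (pw50 ω hω h3)

private lemma zc31 : (1:F) + ω ^ 31 = ω ^ 67 := by
  linear_combination pw31 ω hω h3 - (pw67 ω hω h3) + (1) * h3

private lemma zc32 : (1:F) + ω ^ 32 = ω ^ 46 := by
  linear_combination pw32 ω hω h3 - (pw46 ω hω h3) + (1) * h3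

private lemma zc33 : (1:F) + ω ^ 33 = ω ^ 16 := by
  linear_combination pw33 ω hω h3 - (pw16 ω hω h3)

private lemma zc34 : (1:F) + ω ^ 34 = ω ^ 45 := by
  linear_combination pw34 ω hω h3 - (pw45 ω hω h3) + (1) * h3

private lemma zc35 : (1:F) + ω ^ 35 = ω ^ 61 := by
  linear_combination pw35 ω hω h3 - (pw61 ω hω h3)

private lemma zc36 : (1:F) + ω ^ 36 = ω ^ 37 := by
  linear_combination pw36 ω hω h3 - (pw37 ω hω h3)

private lemma zc37 : (1:F) + ω ^ 37 = ω ^ 49 := by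
  linear_combination pw37 ω hω h3 - (pw49 ω hω h3) + (1) * h3

private lemma zc38 : (1:F) + ω ^ 38 = ω ^ 15 := by
  linear_combination pw38 ω hω h3 - (pw15 ω hω h3) + (1) * h3

private lemma zc39 : (1:F) + ω ^ 39 = ω ^ 43 := by
  linear_combination pw39 ω hω h3 - (pw43 ω hω h3) + (1) * h3

private lemma zc41 : (1:F) + ω ^ 41 = ω ^ 4 := by
  linear_combination pw41 ω hω h3 - (pw4 ω hω h3)

private lemma zc42 : (1:F) + ω ^ 42 = ω ^ 57 := by
  linear_combination pw42 ω hω h3 - (pw57 ω hω h3)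

private lemma zc43 : (1:F) + ω ^ 43 = ω ^ 12 := by
  linear_combination pw43 ω hω h3 - (pw12 ω hω h3)

private lemma zc44 : (1:F) + ω ^ 44 = ω ^ 1 := by
  linear_combination pw44 ω hω h3 - (pw1 ω hω h3) + (1) * h3

private lemma zc45 : (1:F) + ω ^ 45 = ω ^ 26 := by
  linear_combination pw45 ω hω h3 - (pw26 ω hω h3)

private lemma zc46 : (1:F) + ω ^ 46 = ω ^ 11 := by
  linear_combination pw46 ω hω h3 - (pw11 ω hω h3)

private lemma zc47 : (1:F) + ω ^ 47 = ω ^ 63 := by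
  linear_combination pw47 ω hω h3 - (pw63 ω hω h3)

private lemma zc48 : (1:F) + ω ^ 48 = ω ^ 14 := by
  linear_combination pw48 ω hω h3 - (pw14 ω hω h3) + (1) * h3

private lemma zc49 : (1:F) + ω ^ 49 = ω ^ 36 := by
  linear_combination pw49 ω hω h3 - (pw36 ω hω h3)

private lemma zc50 : (1:F) + ω ^ 50 = ω ^ 20 := by
  linear_combination pw50 ω hω h3 - (pw20 ω hω h3) + (1) * h3

private lemma zc51 : (1:F) + ω ^ 51 = ω ^ 6 := by
  linear_combination pw51 ω hω h3 - (pw6 ω hω h3) + (1) * h3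

private lemma zc52 : (1:F) + ω ^ 52 = ω ^ 3 := by
  linear_combination pw52 ω hω h3 - (pw3 ω hω h3) + (1) * h3

private lemma zc53 : (1:F) + ω ^ 53 = ω ^ 44 := by
  linear_combination pw53 ω hω h3 - (pw44 ω hω h3)

private lemma zc54 : (1:F) + ω ^ 54 = ω ^ 8 := by
  linear_combination pw54 ω hω h3 - (pw8 ω hω h3)

private lemma zc55 : (1:F) + ω ^ 55 = ω ^ 78 := by
  linear_combination pw55 ω hω h3 - (pw78 ω hω h3)

private lemma zc56 : (1:F) + ω ^ 56 = ω ^ 73 := by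
  linear_combination pw56 ω hω h3 - (pw73 ω hω h3)

private lemma zc57 : (1:F) + ω ^ 57 = ω ^ 64 := by
  linear_combination pw57 ω hω h3 - (pw64 ω hω h3)

private lemma zc58 : (1:F) + ω ^ 58 = ω ^ 33 := by
  linear_combination pw58 ω hω h3 - (pw33 ω hω h3)

private lemma zc59 : (1:F) + ω ^ 59 = ω ^ 54 := by
  linear_combination pw59 ω hω h3 - (pw54 ω hω h3) + (1) * h3

private lemma zc60 : (1:F) + ω ^ 60 = ω ^ 10 := by
  linear_combination pw60 ω hω h3 - (pw10 ω hω h3)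

private lemma zc61 : (1:F) + ω ^ 61 = ω ^ 29 := by
  linear_combination pw61 ω hω h3 - (pw29 ω hω h3)

private lemma zc62 : (1:F) + ω ^ 62 = ω ^ 38 := by
  linear_combination pw62 ω hω h3 - (pw38 ω hω h3)

private lemma zc63 : (1:F) + ω ^ 63 = ω ^ 65 := by
  linear_combination pw63 ω hω h3 - (pw65 ω hω h3) + (1) * h3

private lemma zc64 : (1:F) + ω ^ 64 = ω ^ 42 := by
  linear_combination pw64 ω hω h3 - (pw42 ω hω h3) + (1) * h3

private lemma zc65 : (1:F) + ω ^ 65 = ω ^ 47 := by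
  linear_combination pw65 ω hω h3 - (pw47 ω hω h3)

private lemma zc66 : (1:F) + ω ^ 66 = ω ^ 5 := by
  linear_combination pw66 ω hω h3 - (pw5 ω hω h3) + (1) * h3

private lemma zc67 : (1:F) + ω ^ 67 = ω ^ 28 := by
  linear_combination pw67 ω hω h3 - (pw28 ω hω h3)

private lemma zc68 : (1:F) + ω ^ 68 = ω ^ 27 := by
  linear_combination pw68 ω hω h3 - (pw27 ω hω h3) + (1) * h3

private lemma zc69 : (1:F) + ω ^ 69 = ω ^ 21 := by
  linear_combination pw69 ω hω h3 - (pw21 ω hω h3)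

private lemma zc70 : (1:F) + ω ^ 70 = ω ^ 60 := by
  linear_combination pw70 ω hω h3 - (pw60 ω hω h3) + (1) * h3

private lemma zc71 : (1:F) + ω ^ 71 = ω ^ 68 := by
  linear_combination pw71 ω hω h3 - (pw68 ω hω h3)

private lemma zc72 : (1:F) + ω ^ 72 = ω ^ 51 := by
  linear_combination pw72 ω hω h3 - (pw51 ω hω h3)

private lemma zc73 : (1:F) + ω ^ 73 = ω ^ 18 := by
  linear_combination pw73 ω hω h3 - (pw18 ω hω h3) + (1) * h3

private lemma zc74 : (1:F) + ω ^ 74 = ω ^ 66 := by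
  linear_combination pw74 ω hω h3 - (pw66 ω hω h3)

private lemma zc75 : (1:F) + ω ^ 75 = ω ^ 69 := by
  linear_combination pw75 ω hω h3 - (pw69 ω hω h3)

private lemma zc76 : (1:F) + ω ^ 76 = ω ^ 9 := by
  linear_combination pw76 ω hω h3 - (pw9 ω hω h3) + (1) * h3

private lemma zc77 : (1:F) + ω ^ 77 = ω ^ 76 := by
  linear_combination pw77 ω hω h3 - (pw76 ω hω h3)

private lemma zc78 : (1:F) + ω ^ 78 = ω ^ 22 := by
  linear_combination pw78 ω hω h3 - (pw22 ω hω h3)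

private lemma zc79 : (1:F) + ω ^ 79 = ω ^ 52 := by
  linear_combination pw79 ω hω h3 - (pw52 ω hω h3)

private lemma zc40 : (1:F) + ω ^ 40 = 0 := by
  linear_combination pw40 ω hω h3 + (1:F) * h3

private lemma hne16 : ω ^ 16 ≠ 1 := by
  intro h
  have h1 : (1:F) = 0 := by linear_combination (1 + 2*ω + 2*ω^3) * h + (1 + 2*ω + 2*ω^2 + ω^4 + 2*ω^6 + 2*ω^7 + 2*ω^10 + ω^11 + ω^12 + ω^13 + ω^15) * hω + (1 + ω + (-1)*ω^5 + (-1)*ω^8 + (-1)*ω^11 + (-1)*ω^14 + (-1)*ω^16 + (-1)*ω^17 + (-1)*ω^19) * h3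
  exact one_ne_zero h1

private lemma hne40 : ω ^ 40 ≠ 1 := by
  intro h
  have h1 : (1:F) = 0 := by linear_combination (1) * h + (1 + ω + ω^2 + ω^3 + 2*ω^4 + ω^6 + 2*ω^7 + ω^8 + ω^9 + 2*ω^10 + ω^11 + 2*ω^12 + 2*ω^14 + 2*ω^16 + 2*ω^17 + ω^18 + ω^19 + 2*ω^21 + ω^23 + ω^24 + ω^27 + 2*ω^28 + 2*ω^29 + 2*ω^30 + 2*ω^32 + ω^33 + 2*ω^36) * hω + (1 + (-1)*ω^5 + (-1)*ω^8 + (-1)*ω^11 + (-1)*ω^13 + (-1)*ω^15 + (-1)*ω^18 + (-1)*ω^20 + (-1)*ω^22 + (-1)*ω^25 + (-1)*ω^31 + (-1)*ω^33 + (-1)*ω^34 + (-1)*ω^37 + (-1)*ω^40) * h3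
  exact one_ne_zero h1

private lemma hne9 : ω ^ 9 ≠ ω := by
  intro h
  have h1 : (1:F) = 0 := by linear_combination (ω + ω^3) * h + (2*1 + 2*ω + ω^2 + ω^3 + 2*ω^4 + ω^5 + 2*ω^6 + 2*ω^8) * hω + (1 + (-1)*ω^5 + (-1)*ω^7 + (-1)*ω^9 + (-1)*ω^10 + (-1)*ω^12) * h3
  exact one_ne_zero h1
end Cert
private lemma zfact {F : Type*} [Field F] (ω : F) (hω : ω ^ 4 + ω - 1 = 0) (h3 : (3:F) = 0) :
    ∀ k : ℕ, k < 80 → k ≠ 40 → (1:F) + ω ^ k = ω ^ (ztabn k) := fun k hk h40 =>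
  match k, hk, h40 with
  | 0, _, _ => zc0 ω hω h3
  | 1, _, _ => zc1 ω hω h3
  | 2, _, _ => zc2 ω hω h3
  | 3, _, _ => zc3 ω hω h3
  | 4, _, _ => zc4 ω hω h3
  | 5, _, _ => zc5 ω hω h3
  | 6, _, _ => zc6 ω hω h3
  | 7, _, _ => zc7 ω hω h3
  | 8, _, _ => zc8 ω hω h3
  | 9, _, _ => zc9 ω hω h3
  | 10, _, _ => zc10 ω hω h3
  | 11, _, _ => zc11 ω hω h3
  | 12, _, _ => zc12 ω hω h3
  | 13, _, _ => zc13 ω hω h3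
  | 14, _, _ => zc14 ω hω h3
  | 15, _, _ => zc15 ω hω h3
  | 16, _, _ => zc16 ω hω h3
  | 17, _, _ => zc17 ω hω h3
  | 18, _, _ => zc18 ω hω h3
  | 19, _, _ => zc19 ω hω h3
  | 20, _, _ => zc20 ω hω h3
  | 21, _, _ => zc21 ω hω h3
  | 22, _, _ => zc22 ω hω h3
  | 23, _, _ => zc23 ω hω h3
  | 24, _, _ => zc24 ω hω h3
  | 25, _, _ => zc25 ω hω h3
  | 26, _, _ => zc26 ω hω h3
  | 27, _, _ => zc27 ω hω h3
  | 28, _, _ => zc28 ω hω h3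
  | 29, _, _ => zc29 ω hω h3
  | 30, _, _ => zc30 ω hω h3
  | 31, _, _ => zc31 ω hω h3
  | 32, _, _ => zc32 ω hω h3
  | 33, _, _ => zc33 ω hω h3
  | 34, _, _ => zc34 ω hω h3
  | 35, _, _ => zc35 ω hω h3
  | 36, _, _ => zc36 ω hω h3
  | 37, _, _ => zc37 ω hω h3
  | 38, _, _ => zc38 ω hω h3
  | 39, _, _ => zc39 ω hω h3
  | 40, _, h => absurd rfl h
  | 41, _, _ => zc41 ω hω h3
  | 42, _, _ => zc42 ω hω h3
  | 43, _, _ => zc43 ω hω h3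
  | 44, _, _ => zc44 ω hω h3
  | 45, _, _ => zc45 ω hω h3
  | 46, _, _ => zc46 ω hω h3
  | 47, _, _ => zc47 ω hω h3
  | 48, _, _ => zc48 ω hω h3
  | 49, _, _ => zc49 ω hω h3
  | 50, _, _ => zc50 ω hω h3
  | 51, _, _ => zc51 ω hω h3
  | 52, _, _ => zc52 ω hω h3
  | 53, _, _ => zc53 ω hω h3
  | 54, _, _ => zc54 ω hω h3
  | 55, _, _ => zc55 ω hω h3
  | 56, _, _ => zc56 ω hω h3
  | 57, _, _ => zc57 ω hω h3
  | 58, _, _ => zc58 ω hω h3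
  | 59, _, _ => zc59 ω hω h3
  | 60, _, _ => zc60 ω hω h3
  | 61, _, _ => zc61 ω hω h3
  | 62, _, _ => zc62 ω hω h3
  | 63, _, _ => zc63 ω hω h3
  | 64, _, _ => zc64 ω hω h3
  | 65, _, _ => zc65 ω hω h3
  | 66, _, _ => zc66 ω hω h3
  | 67, _, _ => zc67 ω hω h3
  | 68, _, _ => zc68 ω hω h3
  | 69, _, _ => zc69 ω hω h3
  | 70, _, _ => zc70 ω hω h3
  | 71, _, _ => zc71 ω hω h3
  | 72, _, _ => zc72 ω hω h3
  | 73, _, _ => zc73 ω hω h3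
  | 74, _, _ => zc74 ω hω h3
  | 75, _, _ => zc75 ω hω h3
  | 76, _, _ => zc76 ω hω h3
  | 77, _, _ => zc77 ω hω h3
  | 78, _, _ => zc78 ω hω h3
  | 79, _, _ => zc79 ω hω h3
  | (n+80), h, _ => absurd h (by omega)
section FieldFacts
variable {F : Type*} [Field F] [Fintype F] [DecidableEq F] (ω : F)

private lemma charF (hcard : Fintype.card F = 81) : CharP F 3 := by
  obtain ⟨p, hp⟩ := CharP.exists F
  haveI := hp
  obtain ⟨n, hpp, hc⟩ := FiniteField.card F p
  have hdvd : p ∣ 3 ^ 4 := by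
    refine Dvd.intro (p ^ ((n : ℕ) - 1)) ?_
    rw [← pow_succ']
    have : (n : ℕ) - 1 + 1 = (n : ℕ) := Nat.succ_pred_eq_of_pos n.pos
    rw [this, ← hc, hcard]; norm_num
  have hp3 : p = 3 := by
    have := hpp.dvd_of_dvd_pow hdvd
    exact (Nat.prime_dvd_prime_iff_eq hpp (by norm_num)).mp this
  rwa [hp3] at hp
private lemma h3F (hcard : Fintype.card F = 81) : (3 : F) = 0 := by
  haveI := charF (F := F) hcard
  exact_mod_cast (CharP.cast_eq_zero F 3)

variable (hω : ω ^ 4 + ω - 1 = 0)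
include hω

private lemma ω_ne_zero : ω ≠ 0 := by
  intro h; rw [h] at hω; simp at hω

variable (hcard : Fintype.card F = 81)
include hcard

private lemma pow81 : ω ^ 81 = ω := by
  have := FiniteField.pow_card ω
  rwa [hcard] at this

private lemma pow80 : ω ^ 80 = 1 := by
  have h := pow81 ω hω hcard
  have h2 : ω ^ 80 * ω = 1 * ω := by rw [one_mul, ← pow_succ]; exact h
  exact mul_right_cancel₀ (ω_ne_zero ω hω) h2

private lemma ordω : orderOf ω = 80 := by
  have hdvd : orderOf ω ∣ 80 := orderOf_dvd_of_pow_eq_one (pow80 ω hω hcard)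
  have h3 := h3F (F := F) hcard
  have hb : ∀ d < 81, d ∣ 80 → d ∣ 16 ∨ d ∣ 40 ∨ d = 80 := by decide
  have hlt : orderOf ω < 81 := by
    have := Nat.le_of_dvd (by norm_num) hdvd; omega
  rcases hb _ hlt hdvd with h | h | h
  · exact absurd (orderOf_dvd_iff_pow_eq_one.mp h) (hne16 ω hω h3)
  · exact absurd (orderOf_dvd_iff_pow_eq_one.mp h) (hne40 ω hω h3)
  · exact h

private lemma powmod (n : ℕ) : ω ^ n = ω ^ (n % 80) := by
  conv_lhs => rw [← Nat.div_add_mod n 80]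
  rw [pow_add, pow_mul, pow80 ω hω hcard, one_pow, one_mul]

private lemma ordu : orderOf (Units.mk0 ω (ω_ne_zero ω hω)) = 80 := by
  rw [← orderOf_units]
  simpa using ordω ω hω hcard

private lemma powinj {a b : ℕ} (ha : a < 80) (hb : b < 80) (h : ω ^ a = ω ^ b) : a = b := by
  set u : Fˣ := Units.mk0 ω (ω_ne_zero ω hω) with hu
  have hupow : u ^ a = u ^ b := by
    ext; rw [Units.val_pow_eq_pow_val, Units.val_pow_eq_pow_val]; simpa [hu] using h
  have := pow_eq_pow_iff_modEq.mp hupow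
  rw [ordu ω hω hcard] at this
  exact this.eq_of_lt_of_lt ha hb

private lemma genω : ∀ y : F, y ≠ 0 → ∃ n : ℕ, ω ^ n = y := by
  intro y hy
  set u : Fˣ := Units.mk0 ω (ω_ne_zero ω hω) with hu
  have hou : orderOf u = 80 := ordu ω hω hcard
  have hcardU : Nat.card Fˣ = 80 := by
    simp [Nat.card_eq_fintype_card, Fintype.card_units, hcard]
  have htop : Subgroup.zpowers u = ⊤ := by
    apply Subgroup.eq_top_of_card_eq
    rw [Nat.card_zpowers, hou, hcardU]
  have hfin : IsOfFinOrder u := isOfFinOrder_of_finite u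
  have hyu : (Units.mk0 y hy : Fˣ) ∈ Subgroup.zpowers u := by rw [htop]; trivial
  have : (Units.mk0 y hy : Fˣ) ∈ (Submonoid.powers u : Set Fˣ) := by
    rw [hfin.powers_eq_zpowers]; exact_mod_cast hyu
  obtain ⟨n, hn⟩ := this
  refine ⟨n, ?_⟩
  have := congrArg (Units.val) hn
  simpa [hu] using this

end FieldFacts
section GroupFacts
open Equiv
variable {F : Type*} [Field F] [Fintype F] [DecidableEq F] (ω : F)
variable (μ φ : Equiv.Perm F) (hμ : ∀ y : F, μ y = ω ^ 5 * y) (hφ : ∀ y : F, φ y = y ^ 9)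

private lemma μpow (hμ : ∀ y : F, μ y = ω ^ 5 * y) :
    ∀ (n : ℕ) (y : F), (μ ^ n) y = ω ^ (5 * n) * y := by
  intro n
  induction n with
  | zero => intro y; simp
  | succ m ih =>
    intro y
    rw [pow_succ, Equiv.Perm.mul_apply, hμ, ih]
    rw [Nat.mul_succ, pow_add]; ring

private lemma φpow (hφ : ∀ y : F, φ y = y ^ 9) :
    ∀ (n : ℕ) (y : F), (φ ^ n) y = y ^ (9 ^ n) := by
  intro n
  induction n with
  | zero => intro y; simp
  | succ m ih =>
    intro y
    rw [pow_succ, Equiv.Perm.mul_apply, hφ, ih, ← pow_mul]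
    congr 1
    ring

variable (hω : ω ^ 4 + ω - 1 = 0) (hcard : Fintype.card F = 81)

private lemma μ16 (hμ : ∀ y : F, μ y = ω ^ 5 * y) (hω : ω ^ 4 + ω - 1 = 0)
    (hcard : Fintype.card F = 81) : μ ^ 16 = 1 := by
  ext y
  rw [μpow ω μ hμ 16 y]
  norm_num [pow80 ω hω hcard]

private lemma φ2 (hφ : ∀ y : F, φ y = y ^ 9) (hcard : Fintype.card F = 81) : φ ^ 2 = 1 := by
  ext y
  rw [φpow φ hφ 2 y]
  have := FiniteField.pow_card y
  rw [hcard] at this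
  norm_num
  exact this

private lemma relφμ (hμ : ∀ y : F, μ y = ω ^ 5 * y) (hφ : ∀ y : F, φ y = y ^ 9) :
    φ * μ = μ ^ 9 * φ := by
  ext y
  rw [Equiv.Perm.mul_apply, Equiv.Perm.mul_apply, hμ, hφ, hφ, μpow ω μ hμ 9]
  rw [mul_pow, ← pow_mul]

private lemma swapμ (hμ : ∀ y : F, μ y = ω ^ 5 * y) (hφ : ∀ y : F, φ y = y ^ 9) :
    ∀ i : ℕ, φ * μ ^ i = μ ^ (9 * i) * φ := by
  intro i
  induction i with
  | zero => simp
  | succ m ih =>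
    rw [pow_succ, ← mul_assoc, ih, Nat.mul_succ, pow_add, mul_assoc, relφμ ω μ φ hμ hφ,
      mul_assoc]

private lemma swapφj (hμ : ∀ y : F, μ y = ω ^ 5 * y) (hφ : ∀ y : F, φ y = y ^ 9) :
    ∀ j i : ℕ, φ ^ j * μ ^ i = μ ^ (9 ^ j * i) * φ ^ j := by
  intro j
  induction j with
  | zero => intro i; simp
  | succ m ih =>
    intro i
    have h0 : φ ^ (m + 1) * μ ^ i = φ ^ m * (φ * μ ^ i) := by
      rw [pow_succ, mul_assoc]
    rw [h0, swapμ ω μ φ hμ hφ, ← mul_assoc, ih, mul_assoc, ← pow_succ]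
    congr 1
    rw [pow_succ]
    ring

private def SG (hμ : ∀ y : F, μ y = ω ^ 5 * y) (hφ : ∀ y : F, φ y = y ^ 9)
    (hω : ω ^ 4 + ω - 1 = 0) (hcard : Fintype.card F = 81) : Subgroup (Equiv.Perm F) where
  carrier := {g | ∃ i j : ℕ, g = μ ^ i * φ ^ j}
  one_mem' := ⟨0, 0, by simp⟩
  mul_mem' := by
    rintro a b ⟨i, j, rfl⟩ ⟨k, l, rfl⟩
    refine ⟨i + 9 ^ j * k, j + l, ?_⟩
    have h1 : μ ^ i * φ ^ j * (μ ^ k * φ ^ l) = μ ^ i * (φ ^ j * μ ^ k) * φ ^ l := by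
      group
    rw [h1, swapφj ω μ φ hμ hφ, pow_add, pow_add]
    group
  inv_mem' := by
    rintro a ⟨i, j, rfl⟩
    refine ⟨9 ^ j * (15 * i), j, ?_⟩
    have key : (μ ^ i * φ ^ j) * (μ ^ (9 ^ j * (15 * i)) * φ ^ j) = 1 := by
      have h1 : (μ ^ i * φ ^ j) * (μ ^ (9 ^ j * (15 * i)) * φ ^ j)
          = μ ^ i * (φ ^ j * μ ^ (9 ^ j * (15 * i))) * φ ^ j := by group
      rw [h1, swapφj ω μ φ hμ hφ]
      have h2 : μ ^ i * (μ ^ (9 ^ j * (9 ^ j * (15 * i))) * φ ^ j) * φ ^ j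
          = (μ ^ (i + 81 ^ j * (15 * i))) * (φ ^ j * φ ^ j) := by
        rw [pow_add]
        have : (9:ℕ) ^ j * (9 ^ j * (15 * i)) = 81 ^ j * (15 * i) := by
          rw [← mul_assoc, ← mul_pow]; norm_num
        rw [this]; group
      rw [h2]
      have h81 : (81:ℕ) ^ j % 16 = 1 := by
        have : (81:ℕ) ^ j ≡ 1 ^ j [MOD 16] := Nat.ModEq.pow j (by decide)
        simpa [Nat.ModEq] using this
      obtain ⟨s, hs⟩ : ∃ s, 1 + 81 ^ j * 15 = 16 * s := by
        have := h81; exact ⟨(1 + 81 ^ j * 15) / 16, by omega⟩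
      obtain ⟨t, ht⟩ : ∃ t, i + 81 ^ j * (15 * i) = 16 * t := by
        refine ⟨s * i, ?_⟩
        have h5 : i + 81 ^ j * (15 * i) = (1 + 81 ^ j * 15) * i := by ring
        rw [h5, hs]; ring
      rw [ht, pow_mul, μ16 ω μ hμ hω hcard, one_pow, one_mul, ← pow_add]
      have : j + j = 2 * j := by ring
      rw [this, pow_mul, φ2 φ hφ hcard, one_pow]
    exact inv_eq_of_mul_eq_one_right key

private lemma closure_eq (hμ : ∀ y : F, μ y = ω ^ 5 * y) (hφ : ∀ y : F, φ y = y ^ 9)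
    (hω : ω ^ 4 + ω - 1 = 0) (hcard : Fintype.card F = 81) :
    Subgroup.closure {μ, φ} = SG ω μ φ hμ hφ hω hcard := by
  apply le_antisymm
  · rw [Subgroup.closure_le]
    rintro g (rfl | rfl)
    · exact ⟨1, 0, by simp⟩
    · exact ⟨0, 1, by simp⟩
  · rintro g ⟨i, j, rfl⟩
    exact mul_mem (pow_mem (Subgroup.subset_closure (by simp)) i)
      (pow_mem (Subgroup.subset_closure (by simp)) j)

end GroupFacts
section Bridge
open Equiv
variable {F : Type*} [Field F] [Fintype F] [DecidableEq F] (ω : F)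

private def el (k : Fin 81) : F := if k.val < 80 then ω ^ k.val else 0

variable (hω : ω ^ 4 + ω - 1 = 0) (hcard : Fintype.card F = 81)
include hω hcard

private lemma el_inj : Function.Injective (el ω) := by
  intro a b h
  unfold el at h
  by_cases ha : a.val < 80 <;> by_cases hb : b.val < 80
  · rw [if_pos ha, if_pos hb] at h
    exact Fin.ext (powinj ω hω hcard ha hb h)
  · rw [if_pos ha, if_neg hb] at h
    exact absurd h (pow_ne_zero _ (ω_ne_zero ω hω))
  · rw [if_neg ha, if_pos hb] at h
    exact absurd h.symm (pow_ne_zero _ (ω_ne_zero ω hω))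
  · exact Fin.ext (by have := a.2; have := b.2; omega)

private lemma el_bij : Function.Bijective (el ω) := by
  rw [Fintype.bijective_iff_injective_and_card]
  exact ⟨el_inj ω hω hcard, by rw [Fintype.card_fin, hcard]⟩

omit hω hcard in
private lemma ztabn_lt : ∀ k < 80, k ≠ 40 → ztabn k < 80 := by decide

private lemma haddK (a b : Fin 81) : el ω (addK a b) = el ω a + el ω b := by
  have h3 : (3:F) = 0 := h3F hcard
  have ha81 := a.2
  have hb81 := b.2
  by_cases ha : a.val = 80
  · have e1 : addK a b = b := by simp [addK, ha]
    rw [e1, show el ω a = 0 by simp [el, ha], zero_add]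
  · by_cases hb : b.val = 80
    · have e1 : addK a b = a := by simp [addK, ha, hb]
      rw [e1, show el ω b = 0 by simp [el, hb], add_zero]
    · have ha' : a.val < 80 := by omega
      have hb' : b.val < 80 := by omega
      have hela : el ω a = ω ^ a.val := by simp [el, ha']
      have helb : el ω b = ω ^ b.val := by simp [el, hb']
      have hdlt : (b.val + 80 - a.val) % 80 < 80 := Nat.mod_lt _ (by norm_num)
      have hab : (a.val + (b.val + 80 - a.val) % 80) % 80 = b.val := by omega
      by_cases h40 : (b.val + 80 - a.val) % 80 = 40
      · have e1 : addK a b = ⟨80, by omega⟩ := by simp [addK, ha, hb, h40]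
        rw [e1, show el ω (⟨80, by omega⟩ : Fin 81) = 0 by simp [el], hela, helb]
        have hb2 : ω ^ b.val = ω ^ a.val * ω ^ 40 := by
          rw [← pow_add, powmod ω hω hcard (a.val + 40),
            show (a.val + 40) % 80 = b.val by omega]
        rw [hb2]
        linear_combination (-(ω ^ a.val)) * zc40 ω hω h3
      · have e1 : addK a b =
            ⟨(a.val + ztabn ((b.val + 80 - a.val) % 80)) % 80, by omega⟩ := by
          simp [addK, ha, hb, h40]
        rw [e1, hela, helb]
        have h1 : el ω (⟨(a.val + ztabn ((b.val + 80 - a.val) % 80)) % 80, by omega⟩ : Fin 81)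
            = ω ^ ((a.val + ztabn ((b.val + 80 - a.val) % 80)) % 80) := by
          simp only [el]
          rw [if_pos (Nat.mod_lt _ (by norm_num))]
        rw [h1, ← powmod ω hω hcard, pow_add, ← zfact ω hω h3 _ hdlt h40,
          mul_add, mul_one, ← pow_add, powmod ω hω hcard (a.val + (b.val + 80 - a.val) % 80), hab]

variable (μ φ : Equiv.Perm F) (hμ : ∀ y : F, μ y = ω ^ 5 * y) (hφ : ∀ y : F, φ y = y ^ 9)
include hμ hφ

private lemma happly (i j : ℕ) (k : Fin 81) :
    (μ ^ i * φ ^ j) (el ω k) = el ω (gKf i j k) := by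
  rw [Equiv.Perm.mul_apply, φpow φ hφ, μpow ω μ hμ]
  by_cases hk : k.val = 80
  · have h0 : el ω k = 0 := by simp [el, hk]
    rw [h0, zero_pow (by positivity), mul_zero]
    simp [gKf, hk, h0]
  · have hk' : k.val < 80 := by have := k.2; omega
    have h0 : el ω k = ω ^ k.val := by simp [el, hk']
    rw [h0, ← pow_mul, ← pow_add]
    have e1 : gKf i j k = ⟨(5 * i + 9 ^ j * k.val) % 80, by omega⟩ := by
      simp [gKf, hk]
    rw [e1]
    have e2 : el ω (⟨(5 * i + 9 ^ j * k.val) % 80, by omega⟩ : Fin 81)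
        = ω ^ ((5 * i + 9 ^ j * k.val) % 80) := by
      unfold el
      rw [if_pos (show ((⟨(5 * i + 9 ^ j * k.val) % 80, by omega⟩ : Fin 81) : ℕ) < 80
        from Nat.mod_lt _ (by norm_num))]
    rw [e2, ← powmod ω hω hcard]
    congr 1
    ring

omit hμ hφ in
omit hω hcard in
private lemma elval : el ω (80 : Fin 81) = 0 ∧ el ω (0 : Fin 81) = 1 ∧
    el ω (16 : Fin 81) = ω ^ 16 ∧ el ω (56 : Fin 81) = ω ^ 56 ∧
    el ω (58 : Fin 81) = ω ^ 58 ∧ el ω (73 : Fin 81) = ω ^ 73 := by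
  refine ⟨by simp [el, show ((80:Fin 81):ℕ) = 80 from rfl],
    by simp [el, show ((0:Fin 81):ℕ) = 0 from rfl],
    by simp [el, show ((16:Fin 81):ℕ) = 16 from rfl],
    by simp [el, show ((56:Fin 81):ℕ) = 56 from rfl],
    by simp [el, show ((58:Fin 81):ℕ) = 58 from rfl],
    by simp [el, show ((73:Fin 81):ℕ) = 73 from rfl]⟩

omit hμ hφ in
omit hω hcard in
private lemma hBset :
    ({0, 1, ω ^ 16, ω ^ 56, ω ^ 58, ω ^ 73} : Finset F) = BK.image (el ω) := by
  obtain ⟨h80, h0, h16, h56, h58, h73⟩ := elval ω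
  rw [show BK = {80, 0, 16, 56, 58, 73} from rfl]
  rw [Finset.image_insert, Finset.image_insert, Finset.image_insert, Finset.image_insert,
    Finset.image_insert, Finset.image_singleton]
  rw [h80, h0, h16, h56, h58, h73]

private lemma hblockimg (i : Fin 16) (j : Fin 2) (c : Fin 81) :
    ({0, 1, ω ^ 16, ω ^ 56, ω ^ 58, ω ^ 73} : Finset F).image
      (fun y => (μ ^ (i:ℕ) * φ ^ (j:ℕ)) y + el ω c) = (blockK i j c).image (el ω) := by
  rw [hBset ω, Finset.image_image, blockK, Finset.image_image]
  apply Finset.image_congr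
  intro b _
  simp only [Function.comp_apply]
  rw [happly ω hω hcard μ φ hμ hφ]
  exact (haddK ω hω hcard _ _).symm

end Bridge
section Main
open Equiv
variable {F : Type*} [Field F] [Fintype F] [DecidableEq F] (ω : F)
variable (μ φ : Equiv.Perm F)

private def isBlock (ω : F) (μ φ : Equiv.Perm F) (C : Finset F) : Prop :=
  ∃ g ∈ Subgroup.closure {μ, φ}, ∃ c : F,
    C = ({0, 1, ω ^ 16, ω ^ 56, ω ^ 58, ω ^ 73} : Finset F).image (fun y => g y + c)

variable (hω : ω ^ 4 + ω - 1 = 0) (hcard : Fintype.card F = 81)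
variable (hμ : ∀ y : F, μ y = ω ^ 5 * y) (hφ : ∀ y : F, φ y = y ^ 9)
include hω hcard hμ hφ

private lemma μmod (i : ℕ) : μ ^ i = μ ^ (i % 16) := by
  conv_lhs => rw [← Nat.div_add_mod i 16]
  rw [pow_add, pow_mul, μ16 ω μ hμ hω hcard, one_pow, one_mul]

private lemma φmod (j : ℕ) : φ ^ j = φ ^ (j % 2) := by
  conv_lhs => rw [← Nat.div_add_mod j 2]
  rw [pow_add, pow_mul, φ2 φ hφ hcard, one_pow, one_mul]

private lemma card32 : Nat.card ↥(SG ω μ φ hμ hφ hω hcard) = 32 := by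
  have h3 : (3:F) = 0 := h3F hcard
  have hφne : φ ≠ 1 := by
    intro h1
    refine hne9 ω hω h3 ?_
    rw [← hφ ω, h1, Equiv.Perm.one_apply]
  let e : Fin 16 × Fin 2 → ↥(SG ω μ φ hμ hφ hω hcard) :=
    fun p => ⟨μ ^ (p.1 : ℕ) * φ ^ (p.2 : ℕ), ⟨p.1, p.2, rfl⟩⟩
  have e1 : ∀ m n : ℕ, ((μ ^ m * φ ^ n : Equiv.Perm F)) 1 = ω ^ (5 * m) := by
    intro m n
    rw [Equiv.Perm.mul_apply, φpow φ hφ, one_pow, μpow ω μ hμ, mul_one]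
  have hinj : Function.Injective e := by
    rintro ⟨a, b⟩ ⟨c, d⟩ h
    have hval : μ ^ (a : ℕ) * φ ^ (b : ℕ) = μ ^ (c : ℕ) * φ ^ (d : ℕ) :=
      congrArg Subtype.val h
    have hac : (a : ℕ) = c := by
      have h1 := congrArg (fun g : Equiv.Perm F => g 1) hval
      simp only [e1] at h1
      have := powinj ω hω hcard (by have := a.2; omega) (by have := c.2; omega) h1
      omega
    have hbd : φ ^ (b : ℕ) = φ ^ (d : ℕ) := by
      rw [hac] at hval
      exact mul_left_cancel hval
    have hb2 := b.2
    have hd2 := d.2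
    have hbd' : (b : ℕ) = (d : ℕ) := by
      by_contra hne
      interval_cases hb' : (b : ℕ) <;> interval_cases hd' : (d : ℕ)
      · omega
      · rw [pow_zero, pow_one] at hbd; exact hφne hbd.symm
      · rw [pow_zero, pow_one] at hbd; exact hφne hbd
      · omega
    exact Prod.ext (Fin.ext hac) (Fin.ext hbd')
  have hsurj : Function.Surjective e := by
    rintro ⟨g, i, j, rfl⟩
    refine ⟨(⟨i % 16, Nat.mod_lt _ (by norm_num)⟩, ⟨j % 2, Nat.mod_lt _ (by norm_num)⟩), ?_⟩
    apply Subtype.ext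
    show μ ^ (i % 16) * φ ^ (j % 2) = μ ^ i * φ ^ j
    rw [← μmod ω μ φ hω hcard hμ hφ, ← φmod ω μ φ hω hcard hμ hφ]
  rw [← Nat.card_congr (Equiv.ofBijective e ⟨hinj, hsurj⟩)]
  simp

private lemma closure_add :
    ∀ g ∈ Subgroup.closure {μ, φ}, ∀ u v : F, g (u + v) = g u + g v := by
  haveI := charF (F := F) hcard
  have hch : ∀ x y : F, (x + y) ^ 9 = x ^ 9 + y ^ 9 := by
    intro x y
    calc (x + y) ^ 9 = ((x + y) ^ 3) ^ 3 := by ring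
    _ = (x ^ 3 + y ^ 3) ^ 3 := by rw [add_pow_char]
    _ = (x ^ 3) ^ 3 + (y ^ 3) ^ 3 := by rw [add_pow_char]
    _ = x ^ 9 + y ^ 9 := by ring
  let A : Subgroup (Equiv.Perm F) :=
    { carrier := {g : Equiv.Perm F | ∀ u v : F, g (u + v) = g u + g v}
      one_mem' := fun u v => rfl
      mul_mem' := by
        intro a b ha hb u v
        rw [Equiv.Perm.mul_apply, Equiv.Perm.mul_apply, Equiv.Perm.mul_apply, hb, ha]
      inv_mem' := by
        intro g hg u v
        have h1 : g (g⁻¹ u + g⁻¹ v) = u + v := by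
          rw [hg, Equiv.Perm.coe_inv, Equiv.apply_symm_apply, Equiv.apply_symm_apply]
        calc g⁻¹ (u + v) = g⁻¹ (g (g⁻¹ u + g⁻¹ v)) := by rw [h1]
        _ = g⁻¹ u + g⁻¹ v := g.symm_apply_apply _ }
  have hle : Subgroup.closure {μ, φ} ≤ A := by
    rw [Subgroup.closure_le]
    rintro g (rfl | rfl)
    · intro u v; rw [hμ, hμ, hμ]; ring
    · intro u v; rw [hφ, hφ, hφ]; exact hch u v
  exact fun g hg => hle hg

private lemma gzero {g : Equiv.Perm F} (hg : g ∈ Subgroup.closure {μ, φ}) : g 0 = 0 := by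
  have h := closure_add ω μ φ hω hcard hμ hφ g hg 0 0
  rw [add_zero] at h
  have h2 : g 0 + 0 = g 0 + g 0 := by rw [add_zero]; exact h
  exact (add_left_cancel h2).symm

private lemma gneg {g : Equiv.Perm F} (hg : g ∈ Subgroup.closure {μ, φ}) (u : F) :
    g (-u) = -(g u) := by
  have h := closure_add ω μ φ hω hcard hμ hφ g hg u (-u)
  rw [add_neg_cancel, gzero ω μ φ hω hcard hμ hφ hg] at h
  exact (neg_eq_of_add_eq_zero_right h.symm).symm

private lemma memBL (C : Finset F) :
    isBlock ω μ φ C ↔ ∃ i : Fin 16, ∃ j : Fin 2, ∃ c : Fin 81,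
      C = (blockK i j c).image (el ω) := by
  constructor
  · rintro ⟨g, hg, c, rfl⟩
    rw [closure_eq ω μ φ hμ hφ hω hcard] at hg
    obtain ⟨i, j, rfl⟩ := hg
    obtain ⟨ck, rfl⟩ := (el_bij ω hω hcard).2 c
    refine ⟨⟨i % 16, Nat.mod_lt _ (by norm_num)⟩, ⟨j % 2, Nat.mod_lt _ (by norm_num)⟩, ck, ?_⟩
    rw [← hblockimg ω hω hcard μ φ hμ hφ]
    conv_lhs => rw [μmod ω μ φ hω hcard hμ hφ, φmod ω μ φ hω hcard hμ hφ]
  · rintro ⟨i, j, c, rfl⟩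
    refine ⟨μ ^ (i : ℕ) * φ ^ (j : ℕ), ?_, el ω c,
      (hblockimg ω hω hcard μ φ hμ hφ i j c).symm⟩
    rw [closure_eq ω μ φ hμ hφ hω hcard]
    exact ⟨i, j, rfl⟩

private lemma mem_image_el (S : Finset (Fin 81)) (k : Fin 81) :
    el ω k ∈ S.image (el ω) ↔ k ∈ S := by
  constructor
  · intro h
    obtain ⟨k', hk', he⟩ := Finset.mem_image.mp h
    rwa [← el_inj ω hω hcard he]
  · exact Finset.mem_image_of_mem _

private lemma blockcard (C : Finset F) (hC : isBlock ω μ φ C) : C.card = 6 := by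
  obtain ⟨g, hg, c, rfl⟩ := hC
  have hinj : Function.Injective (fun y : F => g y + c) := by
    intro u v h
    simp only [add_left_inj] at h
    exact g.injective h
  rw [Finset.card_image_of_injective _ hinj, hBset ω,
    Finset.card_image_of_injective _ (el_inj ω hω hcard)]
  decide

private lemma affBL (C : Finset F) (hC : isBlock ω μ φ C) {g0 : Equiv.Perm F}
    (hg0 : g0 ∈ Subgroup.closure {μ, φ}) (c0 : F) :
    isBlock ω μ φ (C.image (fun z => g0 z + c0)) := by
  obtain ⟨g, hg, c, rfl⟩ := hC
  refine ⟨g0 * g, mul_mem hg0 hg, g0 c + c0, ?_⟩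
  rw [Finset.image_image]
  apply Finset.image_congr
  intro b _
  simp only [Function.comp_apply, Equiv.Perm.mul_apply]
  rw [closure_add ω μ φ hω hcard hμ hφ g0 hg0]
  ring

private lemma lam_transfer (x y : F) {g0 : Equiv.Perm F}
    (hg0 : g0 ∈ Subgroup.closure {μ, φ}) (c0 : F) :
    {C : Finset F | isBlock ω μ φ C ∧ x ∈ C ∧ y ∈ C}.ncard =
    {C : Finset F | isBlock ω μ φ C ∧ (g0 x + c0) ∈ C ∧ (g0 y + c0) ∈ C}.ncard := by
  set τ : F → F := fun z => g0 z + c0 with hτ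
  set σ : F → F := fun z => g0⁻¹ z - g0⁻¹ c0 with hσ
  have hadd := closure_add ω μ φ hω hcard hμ hφ
  have hginv : g0⁻¹ ∈ Subgroup.closure {μ, φ} := inv_mem hg0
  have hστ : ∀ z, σ (τ z) = z := by
    intro z
    simp only [hτ, hσ]
    rw [hadd g0⁻¹ hginv, Equiv.Perm.coe_inv, Equiv.symm_apply_apply]
    ring
  have hτσ : ∀ z, τ (σ z) = z := by
    intro z
    simp only [hτ, hσ]
    rw [sub_eq_add_neg, hadd g0 hg0, gneg ω μ φ hω hcard hμ hφ hg0,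
      Equiv.Perm.coe_inv, Equiv.apply_symm_apply, Equiv.apply_symm_apply]
    ring
  have hτinj : Function.Injective τ := Function.LeftInverse.injective hστ
  have himg : (fun C => Finset.image τ C) '' {C : Finset F | isBlock ω μ φ C ∧ x ∈ C ∧ y ∈ C} =
      {C : Finset F | isBlock ω μ φ C ∧ τ x ∈ C ∧ τ y ∈ C} := by
    ext C
    constructor
    · rintro ⟨D, ⟨hD, hx, hy⟩, rfl⟩
      exact ⟨affBL ω μ φ hω hcard hμ hφ D hD hg0 c0, Finset.mem_image_of_mem τ hx,
        Finset.mem_image_of_mem τ hy⟩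
    · rintro ⟨hC, hx, hy⟩
      refine ⟨C.image σ, ⟨?_, ?_, ?_⟩, ?_⟩
      · have : isBlock ω μ φ (C.image (fun z => g0⁻¹ z + (-(g0⁻¹ c0)))) :=
          affBL ω μ φ hω hcard hμ hφ C hC hginv _
        convert this using 2
        funext z
        rw [hσ]; ring
      · have : σ (τ x) ∈ C.image σ := Finset.mem_image_of_mem σ hx
        rwa [hστ] at this
      · have : σ (τ y) ∈ C.image σ := Finset.mem_image_of_mem σ hy
        rwa [hστ] at this
      · show (Finset.image σ C).image τ = C
        rw [Finset.image_image]
        have : (τ ∘ σ) = id := funext hτσ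
        rw [this, Finset.image_id]
  calc {C : Finset F | isBlock ω μ φ C ∧ x ∈ C ∧ y ∈ C}.ncard
      = ((fun C => Finset.image τ C) ''
          {C : Finset F | isBlock ω μ φ C ∧ x ∈ C ∧ y ∈ C}).ncard :=
        (Set.ncard_image_of_injective _ (Finset.image_injective hτinj)).symm
  _ = _ := by rw [himg]

end Main
section Final
open Equiv
variable {F : Type*} [Field F] [Fintype F] [DecidableEq F] (ω : F)
variable (μ φ : Equiv.Perm F)
variable (hω : ω ^ 4 + ω - 1 = 0) (hcard : Fintype.card F = 81)
variable (hμ : ∀ y : F, μ y = ω ^ 5 * y) (hφ : ∀ y : F, φ y = y ^ 9)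
include hω hcard hμ hφ

private lemma lam_canon (r : Fin 81) (CK1 CK2 : Finset (Fin 81))
    (p1 p2 : Fin 16 × Fin 2 × Fin 81)
    (hw1 : blockK p1.1 p1.2.1 p1.2.2 = CK1) (hw2 : blockK p2.1 p2.2.1 p2.2.2 = CK2)
    (hm1 : (80 : Fin 81) ∈ CK1) (hr1 : r ∈ CK1)
    (hm2 : (80 : Fin 81) ∈ CK2) (hr2 : r ∈ CK2)
    (hne : CK1 ≠ CK2)
    (hall : ∀ (i : Fin 16) (j : Fin 2) (b : Fin 81), b ∈ BK →
      r ∈ blockK i j (negK (gKf i.val j.val b)) →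
      (blockK i j (negK (gKf i.val j.val b)) = CK1 ∨
       blockK i j (negK (gKf i.val j.val b)) = CK2)) :
    {C : Finset F | isBlock ω μ φ C ∧ el ω (80 : Fin 81) ∈ C ∧ el ω r ∈ C}.ncard = 2 := by
  have hset : {C : Finset F | isBlock ω μ φ C ∧ el ω (80 : Fin 81) ∈ C ∧ el ω r ∈ C} =
      {CK1.image (el ω), CK2.image (el ω)} := by
    ext C
    simp only [Set.mem_setOf_eq, Set.mem_insert_iff, Set.mem_singleton_iff]
    constructor
    · rintro ⟨hB, h80, hr⟩
      obtain ⟨i, j, c, rfl⟩ := (memBL ω μ φ hω hcard hμ hφ C).mp hB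
      rw [mem_image_el ω μ φ hω hcard hμ hφ] at h80 hr
      have h80' : (80 : Fin 81) ∈ BK.image (fun b => addK (gKf i.val j.val b) c) := h80
      obtain ⟨b, hb, hab⟩ := Finset.mem_image.mp h80'
      have hc : c = negK (gKf i.val j.val b) := dneg _ _ hab
      subst hc
      rcases hall i j b hb hr with h | h
      · left; rw [h]
      · right; rw [h]
    · rintro (rfl | rfl)
      · refine ⟨(memBL ω μ φ hω hcard hμ hφ _).mpr ⟨p1.1, p1.2.1, p1.2.2, by rw [hw1]⟩,
          (mem_image_el ω μ φ hω hcard hμ hφ _ _).mpr hm1, (mem_image_el ω μ φ hω hcard hμ hφ _ _).mpr hr1⟩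
      · refine ⟨(memBL ω μ φ hω hcard hμ hφ _).mpr ⟨p2.1, p2.2.1, p2.2.2, by rw [hw2]⟩,
          (mem_image_el ω μ φ hω hcard hμ hφ _ _).mpr hm2, (mem_image_el ω μ φ hω hcard hμ hφ _ _).mpr hr2⟩
  rw [hset]
  exact Set.ncard_pair ((Finset.image_injective (el_inj ω hω hcard)).ne hne)

private lemma lam2 (x y : F) (hxy : x ≠ y) :
    {C : Finset F | isBlock ω μ φ C ∧ x ∈ C ∧ y ∈ C}.ncard = 2 := by
  have hd : y - x ≠ 0 := sub_ne_zero.mpr (Ne.symm hxy)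
  obtain ⟨n, hn⟩ := genω ω hω hcard (y - x) hd
  have hklt : n % 80 < 80 := Nat.mod_lt _ (by norm_num)
  have hk : ω ^ (n % 80) = y - x := by rw [← powmod ω hω hcard]; exact hn
  obtain ⟨i, j, r, hr⟩ := dred ⟨n % 80, hklt⟩
  obtain ⟨rv, hrlt⟩ := r
  set g0 : Equiv.Perm F := μ ^ (i : ℕ) * φ ^ (j : ℕ) with hg0def
  have hg0 : g0 ∈ Subgroup.closure {μ, φ} := by
    rw [closure_eq ω μ φ hμ hφ hω hcard]; exact ⟨i, j, rfl⟩
  rw [lam_transfer ω μ φ hω hcard hμ hφ x y hg0 (-(g0 x))]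
  have hτx : g0 x + -(g0 x) = el ω (80 : Fin 81) := by
    rw [(elval ω).1]; ring
  have hτy : g0 y + -(g0 x) = el ω (⟨rv, by omega⟩ : Fin 81) := by
    have h1 : g0 y + -(g0 x) = g0 (y - x) := by
      have h2 := closure_add ω μ φ hω hcard hμ hφ g0 hg0 y (-x)
      rw [gneg ω μ φ hω hcard hμ hφ hg0 x] at h2
      rw [sub_eq_add_neg, h2]
    rw [h1, ← hk]
    have h3 : ω ^ (n % 80) = el ω (⟨n % 80, by omega⟩ : Fin 81) := by
      unfold el
      rw [if_pos (show ((⟨n % 80, by omega⟩ : Fin 81) : ℕ) < 80 from hklt)]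
    rw [h3, hg0def, happly ω hω hcard μ φ hμ hφ]
    congr 1
    have h4 : gKf (i : ℕ) (j : ℕ) (⟨n % 80, by omega⟩ : Fin 81) =
        ⟨(5 * (i : ℕ) + 9 ^ (j : ℕ) * (n % 80)) % 80, by omega⟩ := by
      simp only [gKf]
      rw [if_neg (show n % 80 ≠ 80 by omega)]
    rw [h4]
    exact Fin.ext hr
  rw [hτx, hτy]
  interval_cases rv
  · exact lam_canon ω μ φ hω hcard hμ hφ _ _ _ (0, 1, 24) (0, 0, 16) dw0.1 dw0.2.1
      dw0.2.2.1 dw0.2.2.2.1 dw0.2.2.2.2.1 dw0.2.2.2.2.2.1 dw0.2.2.2.2.2.2 dlam0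
  · exact lam_canon ω μ φ hω hcard hμ hφ _ _ _ (5, 0, 1) (5, 0, 43) dw1.1 dw1.2.1
      dw1.2.2.1 dw1.2.2.2.1 dw1.2.2.2.2.1 dw1.2.2.2.2.2.1 dw1.2.2.2.2.2.2 dlam1
  · exact lam_canon ω μ φ hω hcard hμ hφ _ _ _ (0, 1, 2) (5, 1, 2) dw2.1 dw2.2.1
      dw2.2.2.1 dw2.2.2.2.1 dw2.2.2.2.2.1 dw2.2.2.2.2.2.1 dw2.2.2.2.2.2.2 dlam2

private lemma mov (C : Finset F) (hC : isBlock ω μ φ C) (x : F) (hx : x ∈ C) :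
    ∃ g ∈ Subgroup.closure {μ, φ}, ∃ c : F,
      C.image (fun z => g z + c) = ({0, 1, ω ^ 16, ω ^ 56, ω ^ 58, ω ^ 73} : Finset F) ∧
      g x + c = 0 := by
  obtain ⟨i, j, ck, rfl⟩ := (memBL ω μ φ hω hcard hμ hφ C).mp hC
  obtain ⟨xk, hxk, rfl⟩ := Finset.mem_image.mp hx
  have hxk' : xk ∈ BK.image (fun b => addK (gKf i.val j.val b) ck) := hxk
  obtain ⟨b, hb, rfl⟩ := Finset.mem_image.mp hxk'
  obtain ⟨hstB, hstb⟩ := dstab b hb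
  set p := stabf b
  set g1 : Equiv.Perm F := μ ^ (i : ℕ) * φ ^ (j : ℕ) with hg1def
  have hg1 : g1 ∈ Subgroup.closure {μ, φ} := by
    rw [closure_eq ω μ φ hμ hφ hω hcard]; exact ⟨i, j, rfl⟩
  set s : Equiv.Perm F := μ ^ (p.1 : ℕ) * φ ^ (p.2.1 : ℕ) with hsdef
  have hs : s ∈ Subgroup.closure {μ, φ} := by
    rw [closure_eq ω μ φ hμ hφ hω hcard]; exact ⟨p.1, p.2.1, rfl⟩
  have hg1inv : g1⁻¹ ∈ Subgroup.closure {μ, φ} := inv_mem hg1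
  refine ⟨s * g1⁻¹, mul_mem hs hg1inv, el ω p.2.2 - s (g1⁻¹ (el ω ck)), ?_, ?_⟩
  · -- image equality
    have hCimg : (blockK i j ck).image (el ω) =
        ({0, 1, ω ^ 16, ω ^ 56, ω ^ 58, ω ^ 73} : Finset F).image
          (fun y => g1 y + el ω ck) := (hblockimg ω hω hcard μ φ hμ hφ i j ck).symm
    rw [hCimg, Finset.image_image]
    have hpt : ∀ y : F,
        ((fun z => (s * g1⁻¹) z + (el ω p.2.2 - s (g1⁻¹ (el ω ck)))) ∘
          (fun y => g1 y + el ω ck)) y = s y + el ω p.2.2 := by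
      intro y
      simp only [Function.comp_apply, Equiv.Perm.mul_apply]
      rw [closure_add ω μ φ hω hcard hμ hφ g1⁻¹ hg1inv, Equiv.Perm.coe_inv, Equiv.symm_apply_apply,
        closure_add ω μ φ hω hcard hμ hφ s hs]
      ring
    rw [Finset.image_congr (fun y _ => hpt y)]
    rw [hblockimg ω hω hcard μ φ hμ hφ p.1 p.2.1 p.2.2, hstB, ← hBset ω]
  · -- flag value
    have hx2 : el ω (addK (gKf i.val j.val b) ck) = g1 (el ω b) + el ω ck := by
      rw [haddK ω hω hcard, hg1def, happly ω hω hcard μ φ hμ hφ]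
    rw [hx2]
    have h5 : (s * g1⁻¹) (g1 (el ω b) + el ω ck) + (el ω p.2.2 - s (g1⁻¹ (el ω ck)))
        = s (el ω b) + el ω p.2.2 := by
      simp only [Equiv.Perm.mul_apply]
      rw [closure_add ω μ φ hω hcard hμ hφ g1⁻¹ hg1inv, Equiv.Perm.coe_inv, Equiv.symm_apply_apply,
        closure_add ω μ φ hω hcard hμ hφ s hs]
      ring
    rw [h5, hsdef, happly ω hω hcard μ φ hμ hφ, ← haddK ω hω hcard, hstb, (elval ω).1]

private lemma flagfinal (C C' : Finset F) (hC : isBlock ω μ φ C) (hC' : isBlock ω μ φ C')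
    (x : F) (hx : x ∈ C) (y : F) (hy : y ∈ C') :
    ∃ g ∈ Subgroup.closure {μ, φ}, ∃ c : F,
      C.image (fun z => g z + c) = C' ∧ g x + c = y := by
  obtain ⟨g1, hg1, c1, hB1, hx1⟩ := mov ω μ φ hω hcard hμ hφ C hC x hx
  obtain ⟨g2, hg2, c2, hB2, hy2⟩ := mov ω μ φ hω hcard hμ hφ C' hC' y hy
  have hg2inv : g2⁻¹ ∈ Subgroup.closure {μ, φ} := inv_mem hg2
  set σ2 : F → F := fun w => g2⁻¹ w - g2⁻¹ c2 with hσ2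
  have hcomp : ∀ z : F, (g2⁻¹ * g1) z + (g2⁻¹ c1 - g2⁻¹ c2) = σ2 (g1 z + c1) := by
    intro z
    simp only [hσ2, Equiv.Perm.mul_apply]
    rw [closure_add ω μ φ hω hcard hμ hφ g2⁻¹ hg2inv]
    ring
  have hσ2τ2 : ∀ z : F, σ2 (g2 z + c2) = z := by
    intro z
    simp only [hσ2]
    rw [closure_add ω μ φ hω hcard hμ hφ g2⁻¹ hg2inv, Equiv.Perm.coe_inv, Equiv.symm_apply_apply]
    ring
  refine ⟨g2⁻¹ * g1, mul_mem hg2inv hg1, g2⁻¹ c1 - g2⁻¹ c2, ?_, ?_⟩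
  · calc C.image (fun z => (g2⁻¹ * g1) z + (g2⁻¹ c1 - g2⁻¹ c2))
        = C.image (fun z => σ2 (g1 z + c1)) := Finset.image_congr (fun z _ => hcomp z)
    _ = (C.image (fun z => g1 z + c1)).image σ2 := by rw [Finset.image_image]; rfl
    _ = (C'.image (fun z => g2 z + c2)).image σ2 := by rw [hB1, hB2]
    _ = C'.image (σ2 ∘ fun z => g2 z + c2) := Finset.image_image
    _ = C' := by
        rw [show (σ2 ∘ fun z => g2 z + c2) = id from funext hσ2τ2, Finset.image_id]
  · rw [hcomp x, hx1, ← hy2, hσ2τ2]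

end Final

/-- Let `F = GF(3)[x]/(x⁴ + x − 1) ≅ GF(3⁴)` (presented here as a field
with 81 elements together with a root `ω` of `X⁴ + X − 1`).  Then `ω` generates `F*`, and
with `B = {0, 1, ω¹⁶, ω⁵⁶, ω⁵⁸, ω⁷³}`, `G₀ = ⟨μ, φ⟩` where `μ : y ↦ ω⁵y`, `φ : y ↦ y⁹`,
and `G = T ⋊ G₀`: the group `G₀` has order 32, the orbit of `B` under `G` is the block set
of a 2-(81,6,2) design, and `G` acts flag-transitively on it. -/
theorem stmt_12 (F : Type*) [Field F] [Fintype F] [DecidableEq F]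
    (hcard : Fintype.card F = 81) (ω : F) (hω : ω ^ 4 + ω - 1 = 0) :
    (∀ y : F, y ≠ 0 → ∃ n : ℕ, ω ^ n = y) ∧
    ∃ μ φ : Equiv.Perm F,
      (∀ y : F, μ y = ω ^ 5 * y) ∧ (∀ y : F, φ y = y ^ 9) ∧
      Nat.card ↥(Subgroup.closure {μ, φ} : Subgroup (Equiv.Perm F)) = 32 ∧
      (∀ C ∈ {C : Finset F | ∃ g ∈ Subgroup.closure {μ, φ}, ∃ c : F,
          C = ({0, 1, ω ^ 16, ω ^ 56, ω ^ 58, ω ^ 73} : Finset F).image (fun y => g y + c)},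
        C.card = 6) ∧
      (∀ x y : F, x ≠ y →
        {C : Finset F | (∃ g ∈ Subgroup.closure {μ, φ}, ∃ c : F,
          C = ({0, 1, ω ^ 16, ω ^ 56, ω ^ 58, ω ^ 73} : Finset F).image (fun z => g z + c)) ∧
          x ∈ C ∧ y ∈ C}.ncard = 2) ∧
      (∀ C ∈ {C : Finset F | ∃ g ∈ Subgroup.closure {μ, φ}, ∃ c : F,
          C = ({0, 1, ω ^ 16, ω ^ 56, ω ^ 58, ω ^ 73} : Finset F).image (fun y => g y + c)},
       ∀ C' ∈ {C : Finset F | ∃ g ∈ Subgroup.closure {μ, φ}, ∃ c : F,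
          C = ({0, 1, ω ^ 16, ω ^ 56, ω ^ 58, ω ^ 73} : Finset F).image (fun y => g y + c)},
       ∀ x ∈ C, ∀ y ∈ C',
        ∃ g ∈ Subgroup.closure {μ, φ}, ∃ c : F,
          C.image (fun z => g z + c) = C' ∧ g x + c = y) := by
  haveI hchar := charF (F := F) hcard
  have hω0 : ω ≠ 0 := ω_ne_zero ω hω
  refine ⟨genω ω hω hcard, ?_⟩
  set μ : Equiv.Perm F := Equiv.mulLeft₀ (ω ^ 5) (pow_ne_zero 5 hω0) with hμdef
  have hμ : ∀ y : F, μ y = ω ^ 5 * y := fun y => rfl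
  have hinj9 : Function.Injective (fun y : F => y ^ 9) := by
    intro a b h
    simp only at h
    have h9 : (a - b) ^ 9 = a ^ 9 - b ^ 9 := by
      calc (a - b) ^ 9 = ((a - b) ^ 3) ^ 3 := by ring
      _ = (a ^ 3 - b ^ 3) ^ 3 := by rw [sub_pow_char]
      _ = (a ^ 3) ^ 3 - (b ^ 3) ^ 3 := by rw [sub_pow_char]
      _ = a ^ 9 - b ^ 9 := by ring
    have hz : (a - b) ^ 9 = 0 := by rw [h9, h, sub_self]
    have := pow_eq_zero_iff (n := 9) (by norm_num) |>.mp hz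
    exact sub_eq_zero.mp this
  set φp : Equiv.Perm F := Equiv.ofBijective _ (Finite.injective_iff_bijective.mp hinj9)
    with hφdef
  have hφ : ∀ y : F, φp y = y ^ 9 := fun y => rfl
  refine ⟨μ, φp, hμ, hφ, ?_, ?_, ?_, ?_⟩
  · rw [closure_eq ω μ φp hμ hφ hω hcard]
    exact card32 ω μ φp hω hcard hμ hφ
  · intro C hC
    exact blockcard ω μ φp hω hcard hμ hφ C hC
  · intro x y hxy
    exact lam2 ω μ φp hω hcard hμ hφ x y hxy
  · intro C hC C' hC' x hx y hy
    exact flagfinal ω μ φp hω hcard hμ hφ C C' hC hC' x hx y hy
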